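/- Let G be a finite 2-Frobenius group with respect to normal subgroups K ≤ L, and let D be a subgroup of G containing K such that D/K is a Frobenius complement of L/K in G/K. If g is a nonidentity element of G and d ∈ D \ K is such that the subgroup ⟨g, d⟩ is cyclic, then g ∈ D. -/

import Mathlib

/-- The cyclic graph `Δ(G)`: vertices are the nonidentity elements of `G`,
with distinct `x` and `y` adjacent iff `⟨x, y⟩` is cyclic. -/
def cyclicGraph (G : Type*) [Group G] : SimpleGraph {x : G // x ≠ 1} where
  Adj x y := x ≠ y ∧ IsCyclic ↥(Subgroup.closure ({(x : G), (y : G)} : Set G))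
  symm := ⟨by
    rintro x y ⟨hne, hcyc⟩
    refine ⟨hne.symm, ?_⟩
    rwa [Set.pair_comm]⟩
  loopless := ⟨fun x h => h.1 rfl⟩

/-- `H` is a Frobenius complement of `K` in `L` (all subgroups of an ambient group `G`):
`H ≤ L`, `H` is nontrivial, `L = KH`, `K ⊓ H = 1`, and `C_K(h) = 1` for all `1 ≠ h ∈ H`. -/
def IsFrobeniusComplementIn {G : Type*} [Group G] (K L H : Subgroup G) : Prop :=
  H ≤ L ∧ H ≠ ⊥ ∧ (∀ x ∈ L, ∃ k ∈ K, ∃ h ∈ H, x = k * h) ∧ K ⊓ H = ⊥ ∧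
    ∀ h ∈ H, h ≠ 1 → ∀ k ∈ K, Commute h k → k = 1

/-- `G` is a Frobenius group with kernel `K` and complement `H`. -/
def IsFrobenius (G : Type*) [Group G] (K H : Subgroup G) : Prop :=
  K.Normal ∧ K ≠ ⊥ ∧ IsFrobeniusComplementIn K ⊤ H

/-- `G` is a 2-Frobenius group with respect to the normal subgroups `K ≤ L`:
`L` is a Frobenius group with kernel `K` (and some complement), and `G/K` is a
Frobenius group with kernel `L/K` (and some complement). -/
def Is2Frobenius (G : Type*) [Group G] (K L : Subgroup G) [K.Normal] [L.Normal] : Prop :=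
  K ≠ ⊥ ∧ K < L ∧
    (∃ H : Subgroup G, IsFrobeniusComplementIn K L H) ∧
    (∃ C : Subgroup (G ⧸ K),
      IsFrobeniusComplementIn (L.map (QuotientGroup.mk' K)) ⊤ C)

theorem swimming_into_D
    {G : Type*} [Group G] [Fintype G] (K L : Subgroup G) [K.Normal] [L.Normal]
    (h2 : Is2Frobenius G K L) (D : Subgroup G) (hKD : K ≤ D)
    (hD : IsFrobeniusComplementIn (L.map (QuotientGroup.mk' K)) ⊤
      (D.map (QuotientGroup.mk' K)))
    (g d : G) (hg : g ≠ 1) (hd : d ∈ D) (hdK : d ∉ K)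
    (hcyc : IsCyclic ↥(Subgroup.closure ({g, d} : Set G))) :
    g ∈ D := by
  classical
  -- g and d commute, being in a common cyclic subgroup
  have hgS : g ∈ Subgroup.closure ({g, d} : Set G) :=
    Subgroup.subset_closure (by simp)
  have hdS : d ∈ Subgroup.closure ({g, d} : Set G) :=
    Subgroup.subset_closure (by simp)
  have hcomm : Commute g d := by
    obtain ⟨c, hc⟩ := hcyc.exists_generator
    obtain ⟨m, hm⟩ := hc ⟨g, hgS⟩
    obtain ⟨n, hn⟩ := hc ⟨d, hdS⟩
    have hm' : ((c : ↥(Subgroup.closure ({g, d} : Set G))) : G) ^ m = g := by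
      have := congrArg (Subtype.val) hm
      simpa using this
    have hn' : ((c : ↥(Subgroup.closure ({g, d} : Set G))) : G) ^ n = d := by
      have := congrArg (Subtype.val) hn
      simpa using this
    have h := (Commute.refl ((c : ↥(Subgroup.closure ({g, d} : Set G))) : G)).zpow_zpow m n
    rwa [hm', hn'] at h
  -- pass to the quotient
  set π := QuotientGroup.mk' K with hπ
  set Lq := L.map π with hLq
  set Dq := D.map π with hDq
  haveI hLqN : Lq.Normal :=
    Subgroup.Normal.map inferInstance π (QuotientGroup.mk'_surjective K)
  obtain ⟨hle, hne, hprod, hint, hcent⟩ := hD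
  have hu : π d ∈ Dq := ⟨d, hd, rfl⟩
  have hune : π d ≠ 1 := by
    simpa [π, QuotientGroup.mk'_apply, QuotientGroup.eq_one_iff] using hdK
  have hcq : Commute (π g) (π d) := hcomm.map π
  obtain ⟨l, hl, e, he, hx⟩ := hprod (π g) (Subgroup.mem_top _)
  have h1 : e * π d * e⁻¹ = l⁻¹ * π d * l := by
    have hthis := hcq.eq
    rw [hx] at hthis
    calc e * π d * e⁻¹ = l⁻¹ * (l * e * π d) * e⁻¹ := by group
      _ = l⁻¹ * (π d * (l * e)) * e⁻¹ := by rw [hthis]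
      _ = l⁻¹ * π d * l := by group
  have key : (e * π d * e⁻¹) * (π d)⁻¹ ∈ Lq ⊓ Dq := by
    constructor
    · rw [h1]
      have hc1 : (π d) * l * (π d)⁻¹ ∈ Lq := hLqN.conj_mem l hl (π d)
      have h2 : l⁻¹ * π d * l * (π d)⁻¹ = l⁻¹ * ((π d) * l * (π d)⁻¹) := by group
      rw [h2]
      exact Lq.mul_mem (Lq.inv_mem hl) hc1
    · exact Dq.mul_mem (Dq.mul_mem (Dq.mul_mem he hu) (Dq.inv_mem he)) (Dq.inv_mem hu)
  rw [hint, Subgroup.mem_bot] at key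
  have h3 : e * π d * e⁻¹ = π d := by
    calc e * π d * e⁻¹ = (e * π d * e⁻¹ * (π d)⁻¹) * π d := by group
      _ = π d := by rw [key]; group
  have h4 : l⁻¹ * π d * l = π d := by rw [← h1, h3]
  have hcomm_ul : Commute (π d) l := by
    have h5 := congrArg (fun y => l * y) h4
    have h6 : π d * l = l * π d := by simpa [mul_assoc] using h5
    exact h6
  have hl1 : l = 1 := hcent (π d) hu hune l hl hcomm_ul
  have hxD : π g ∈ Dq := by rw [hx, hl1, one_mul]; exact he
  obtain ⟨d', hd', hd'eq⟩ := hxD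
  have hker : g * d'⁻¹ ∈ K := by
    have h6 : π (g * d'⁻¹) = 1 := by rw [map_mul, map_inv, hd'eq]; group
    exact (QuotientGroup.eq_one_iff _).mp h6
  have hgd' : g * d'⁻¹ ∈ D := hKD hker
  have := D.mul_mem hgd' hd'
  simpa using this
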